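/- Let q, t be complex numbers that are not roots of unity, and let n, m be positive integers. The system of equations $\sum_{i=1}^n x_i^k + \frac{1-q^k}{1-t^k}\sum_{j=1}^m y_j^k = 0$ for $k = 1, \dots, n+m$ has a nonzero solution $(x_1,\dots,x_n,y_1,\dots,y_m) \in \mathbb{C}^{n+m}$ if and only if $t^i q^j = 1$ for some integers $1 \le i \le n$ and $1 \le j \le m$. -/

import Mathlib

open Finset

lemma aux_exists_perm {α : Type*} : ∀ {N : ℕ} (f g : Fin N → α),
    Multiset.map f Finset.univ.val = Multiset.map g Finset.univ.val →
    ∃ σ : Equiv.Perm (Fin N), ∀ i, f (σ i) = g i := by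
  intro N
  induction N with
  | zero => exact fun f g _ => ⟨1, fun i => i.elim0⟩
  | succ N ih =>
    intro f g h
    have hmem : g 0 ∈ Multiset.map f Finset.univ.val := by
      rw [h]
      exact Multiset.mem_map_of_mem _ (Finset.mem_univ_val _)
    obtain ⟨i, -, hi⟩ := Multiset.mem_map.mp hmem
    set f' : Fin (N+1) → α := f ∘ (Equiv.swap i 0) with hf'
    have hmap' : Multiset.map f' Finset.univ.val = Multiset.map f Finset.univ.val := by
      have : (Finset.univ.val.map (⇑(Equiv.swap i 0) : Fin (N+1) → Fin (N+1)))
          = Finset.univ.val := by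
        have := congrArg Finset.val (Finset.map_univ_equiv (Equiv.swap i 0))
        simpa using this
      calc Multiset.map f' Finset.univ.val
          = Multiset.map f (Finset.univ.val.map (⇑(Equiv.swap i 0))) := by
            rw [Multiset.map_map]
        _ = Multiset.map f Finset.univ.val := by rw [this]
    have huniv : (Finset.univ.val : Multiset (Fin (N+1)))
        = 0 ::ₘ Multiset.map Fin.succ Finset.univ.val := by
      rw [Fin.univ_succ, Finset.cons_val, Finset.map_val]
      rfl
    have h0 : f' 0 = g 0 := by simp [hf', Equiv.swap_apply_right, hi]
    have hrest : Multiset.map (f' ∘ Fin.succ) Finset.univ.val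
        = Multiset.map (g ∘ Fin.succ) Finset.univ.val := by
      have h2 : Multiset.map f' Finset.univ.val = Multiset.map g Finset.univ.val := by
        rw [hmap', h]
      rw [huniv] at h2
      simp only [Multiset.map_cons, Multiset.map_map, h0] at h2
      exact (Multiset.cons_inj_right _).mp h2
    obtain ⟨σ', hσ'⟩ := ih _ _ hrest
    refine ⟨(Equiv.Perm.decomposeFin.symm (0, σ')).trans (Equiv.swap i 0), fun s => ?_⟩
    refine Fin.cases ?_ (fun s' => ?_) s
    · simp [Equiv.swap_apply_right, hi]
    · have := hσ' s'
      simp only [Function.comp_apply] at this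
      simpa [Equiv.Perm.decomposeFin_symm_apply_succ, hf'] using this

open MvPolynomial Polynomial in

lemma aux_esymm_eq {N : ℕ} (z w : Fin N → ℂ)
    (h : ∀ k : ℕ, 1 ≤ k → k ≤ N → ∑ i, z i ^ k = ∑ i, w i ^ k) :
    ∀ k : ℕ, k ≤ N →
      MvPolynomial.aeval z (MvPolynomial.esymm (Fin N) ℂ k)
        = MvPolynomial.aeval w (MvPolynomial.esymm (Fin N) ℂ k) := by
  intro k
  induction k using Nat.strong_induction_on with
  | _ k ih =>
    intro hk
    rcases Nat.eq_zero_or_pos k with rfl | hk1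
    · simp [MvPolynomial.esymm_zero]
    have hpsum : ∀ b : ℕ, 1 ≤ b → b ≤ N →
        MvPolynomial.aeval z (MvPolynomial.psum (Fin N) ℂ b)
          = MvPolynomial.aeval w (MvPolynomial.psum (Fin N) ℂ b) := by
      intro b hb1 hb2
      simp only [MvPolynomial.psum, map_sum, map_pow, MvPolynomial.aeval_X]
      exact h b hb1 hb2
    have hnewton := congrArg (MvPolynomial.aeval z) (MvPolynomial.mul_esymm_eq_sum (Fin N) ℂ k)
    have hnewton' := congrArg (MvPolynomial.aeval w) (MvPolynomial.mul_esymm_eq_sum (Fin N) ℂ k)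
    simp only [map_mul, map_natCast, map_pow, map_sum, map_neg, map_one] at hnewton hnewton'
    have hsum : ∑ a ∈ antidiagonal k with a.1 < k,
          (-1 : ℂ) ^ a.1 * MvPolynomial.aeval z (MvPolynomial.esymm (Fin N) ℂ a.1)
            * MvPolynomial.aeval z (MvPolynomial.psum (Fin N) ℂ a.2)
        = ∑ a ∈ antidiagonal k with a.1 < k,
          (-1 : ℂ) ^ a.1 * MvPolynomial.aeval w (MvPolynomial.esymm (Fin N) ℂ a.1)
            * MvPolynomial.aeval w (MvPolynomial.psum (Fin N) ℂ a.2) := by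
      refine Finset.sum_congr rfl fun a ha => ?_
      simp only [Finset.mem_filter, Finset.HasAntidiagonal.mem_antidiagonal] at ha
      obtain ⟨hak, halt⟩ := ha
      have h2 : 1 ≤ a.2 := by omega
      have h2' : a.2 ≤ N := by omega
      rw [ih a.1 halt (by omega), hpsum a.2 h2 h2']
    have hkc : (k : ℂ) ≠ 0 := Nat.cast_ne_zero.mpr (by omega)
    apply mul_left_cancel₀ hkc
    rw [hnewton, hnewton', hsum]

open MvPolynomial Polynomial in

lemma aux_multiset_eq {N : ℕ} (z w : Fin N → ℂ)
    (h : ∀ k : ℕ, 1 ≤ k → k ≤ N → ∑ i, z i ^ k = ∑ i, w i ^ k) :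
    Multiset.map z Finset.univ.val = Multiset.map w Finset.univ.val := by
  set Mz := Multiset.map z Finset.univ.val with hMz
  set Mw := Multiset.map w Finset.univ.val with hMw
  have hcz : Multiset.card Mz = N := by simp [hMz]
  have hcw : Multiset.card Mw = N := by simp [hMw]
  have hesymm : ∀ k : ℕ, k ≤ N → Mz.esymm k = Mw.esymm k := by
    intro k hk
    have := aux_esymm_eq z w h k hk
    rwa [MvPolynomial.aeval_esymm_eq_multiset_esymm, MvPolynomial.aeval_esymm_eq_multiset_esymm]
      at this
  have hpoly : (Mz.map fun a => Polynomial.X - Polynomial.C a).prod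
      = (Mw.map fun a => Polynomial.X - Polynomial.C a).prod := by
    ext k
    rcases le_or_gt k N with hkN | hkN
    · rw [Multiset.prod_X_sub_C_coeff Mz (by omega), Multiset.prod_X_sub_C_coeff Mw (by omega),
        hcz, hcw, hesymm (N - k) (by omega)]
    · rw [Polynomial.coeff_eq_zero_of_natDegree_lt, Polynomial.coeff_eq_zero_of_natDegree_lt]
      · rw [Polynomial.natDegree_multiset_prod_X_sub_C_eq_card, hcw]; exact hkN
      · rw [Polynomial.natDegree_multiset_prod_X_sub_C_eq_card, hcz]; exact hkN
  have := congrArg Polynomial.roots hpoly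
  rwa [Polynomial.roots_multiset_prod_X_sub_C, Polynomial.roots_multiset_prod_X_sub_C] at this

theorem stmt0 (q t : ℂ) (hq : ∀ k : ℕ, 1 ≤ k → q ^ k ≠ 1)
    (ht : ∀ k : ℕ, 1 ≤ k → t ^ k ≠ 1)
    (n m : ℕ) (hn : 0 < n) (hm : 0 < m) :
    (∃ (x : Fin n → ℂ) (y : Fin m → ℂ),
      (x ≠ 0 ∨ y ≠ 0) ∧
      ∀ k : ℕ, 1 ≤ k → k ≤ n + m →
        ∑ i, x i ^ k + (1 - q ^ k) / (1 - t ^ k) * ∑ j, y j ^ k = 0) ↔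
    ∃ i j : ℕ, 1 ≤ i ∧ i ≤ n ∧ 1 ≤ j ∧ j ≤ m ∧ t ^ i * q ^ j = 1 := by
  constructor
  · rintro ⟨x, y, hne, heq⟩
    set z : Fin (n + m) → ℂ := Fin.append x y with hz
    set c : Fin (n + m) → ℂ := fun s => if (s : ℕ) < n then t else q with hc
    set w : Fin (n + m) → ℂ := fun s => c s * z s with hw
    have hct : ∀ i : Fin n, c (Fin.castAdd m i) = t := by
      intro i; simp [hc, i.isLt]
    have hcq : ∀ j : Fin m, c (Fin.natAdd n j) = q := by
      intro j; simp [hc]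
    -- Step A: equal power sums
    have hps : ∀ k : ℕ, 1 ≤ k → k ≤ n + m → ∑ s, z s ^ k = ∑ s, w s ^ k := by
      intro k hk1 hk2
      have htk : (1 : ℂ) - t ^ k ≠ 0 := sub_ne_zero_of_ne (Ne.symm (ht k hk1))
      have h0 := heq k hk1 hk2
      have h2 : (1 - t ^ k) * ∑ i, x i ^ k + (1 - q ^ k) * ∑ j, y j ^ k = 0 := by
        field_simp at h0
        linear_combination h0
      rw [Fin.sum_univ_add, Fin.sum_univ_add]
      simp only [hw, hz, Fin.append_left, Fin.append_right, hct, hcq, mul_pow]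
      rw [← Finset.mul_sum, ← Finset.mul_sum]
      linear_combination h2
    have hmeq := aux_multiset_eq z w hps
    obtain ⟨σ, hσ⟩ := aux_exists_perm z w hmeq
    -- a nonzero coordinate
    have hs0 : ∃ s0 : Fin (n + m), z s0 ≠ 0 := by
      rcases hne with hx | hy
      · obtain ⟨i, hi⟩ := Function.ne_iff.mp hx
        exact ⟨Fin.castAdd m i, by simpa [hz, Fin.append_left] using hi⟩
      · obtain ⟨j, hj⟩ := Function.ne_iff.mp hy
        exact ⟨Fin.natAdd n j, by simpa [hz, Fin.append_right] using hj⟩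
    obtain ⟨s0, hs0⟩ := hs0
    set f : Fin (n + m) → Fin (n + m) := ⇑σ with hf
    have hper : Function.IsPeriodicPt f (orderOf σ) s0 := by
      unfold Function.IsPeriodicPt Function.IsFixedPt
      rw [hf, Equiv.Perm.iterate_eq_pow, pow_orderOf_eq_one]
      rfl
    set L := Function.minimalPeriod f s0 with hLdef
    have hL : 0 < L := hper.minimalPeriod_pos (orderOf_pos σ)
    have hLfix : f^[L] s0 = s0 := Function.iterate_minimalPeriod
    have hchain : ∀ r : ℕ, z (f^[r] s0) = (∏ p ∈ Finset.range r, c (f^[p] s0)) * z s0 := by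
      intro r
      induction r with
      | zero => simp
      | succ r ihr =>
        rw [Function.iterate_succ_apply', Finset.prod_range_succ]
        have : z (f (f^[r] s0)) = c (f^[r] s0) * z (f^[r] s0) := hσ (f^[r] s0)
        rw [this, ihr]
        ring
    have hP1 : (∏ p ∈ Finset.range L, c (f^[p] s0)) = 1 := by
      have h3 := hchain L
      rw [hLfix] at h3
      have : (∏ p ∈ Finset.range L, c (f^[p] s0)) * z s0 = 1 * z s0 := by
        rw [one_mul]; exact h3.symm
      exact mul_right_cancel₀ hs0 this
    set P : ℕ → Prop := fun p => ((f^[p] s0 : Fin (n + m)) : ℕ) < n with hP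
    classical
    set A := (Finset.range L).filter (fun p => P p) with hA
    set B := (Finset.range L).filter (fun p => ¬ P p) with hB
    have hprodsplit : (∏ p ∈ Finset.range L, c (f^[p] s0)) = t ^ A.card * q ^ B.card := by
      rw [← Finset.prod_filter_mul_prod_filter_not (Finset.range L) P]
      congr 1
      · rw [Finset.prod_congr rfl (fun p hp => ?_), Finset.prod_const]
        simp only [hA, Finset.mem_filter] at hp
        show (if ((f^[p] s0 : Fin (n+m)) : ℕ) < n then t else q) = t
        rw [if_pos hp.2]
      · rw [Finset.prod_congr rfl (fun p hp => ?_), Finset.prod_const]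
        simp only [hB, Finset.mem_filter] at hp
        show (if ((f^[p] s0 : Fin (n+m)) : ℕ) < n then t else q) = q
        rw [if_neg hp.2]
    have hinj : Set.InjOn (fun p => f^[p] s0) (Set.Iio L) :=
      Function.iterate_injOn_Iio_minimalPeriod
    have hAcard : A.card ≤ n := by
      have hTcard : (Finset.univ.filter (fun s : Fin (n + m) => (s : ℕ) < n)).card = n := by
        have hset : Finset.univ.filter (fun s : Fin (n + m) => (s : ℕ) < n)
            = Finset.univ.map (Fin.castAddEmb m) := by
          ext s
          simp only [Finset.mem_filter, Finset.mem_univ, true_and, Finset.mem_map]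
          constructor
          · intro hs; exact ⟨⟨(s : ℕ), hs⟩, Fin.ext rfl⟩
          · rintro ⟨i, rfl⟩; exact i.isLt
        rw [hset, Finset.card_map, Finset.card_univ, Fintype.card_fin]
      rw [← hTcard]
      apply Finset.card_le_card_of_injOn (fun p => f^[p] s0)
      · intro p hp
        simp only [hA, Finset.mem_coe, Finset.mem_filter] at hp
        simp only [Finset.mem_coe, Finset.mem_filter, Finset.mem_univ, true_and]
        exact hp.2
      · intro p hp p' hp' hpp'
        rw [Finset.mem_coe, hA, Finset.mem_filter, Finset.mem_range] at hp hp'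
        exact hinj hp.1 hp'.1 hpp'
    have hBcard : B.card ≤ m := by
      have hTcard : (Finset.univ.filter (fun s : Fin (n + m) => ¬ (s : ℕ) < n)).card = m := by
        have hset : Finset.univ.filter (fun s : Fin (n + m) => ¬ (s : ℕ) < n)
            = Finset.univ.map (Fin.natAddEmb n) := by
          ext s
          simp only [Finset.mem_filter, Finset.mem_univ, true_and, Finset.mem_map]
          constructor
          · intro hs
            refine ⟨⟨(s : ℕ) - n, by omega⟩, Fin.ext ?_⟩
            show n + ((s : ℕ) - n) = s
            omega
          · rintro ⟨j, rfl⟩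
            show ¬ (n + (j : ℕ) < n)
            omega
        rw [hset, Finset.card_map, Finset.card_univ, Fintype.card_fin]
      rw [← hTcard]
      apply Finset.card_le_card_of_injOn (fun p => f^[p] s0)
      · intro p hp
        simp only [hB, Finset.mem_coe, Finset.mem_filter] at hp
        simp only [Finset.mem_coe, Finset.mem_filter, Finset.mem_univ, true_and]
        exact hp.2
      · intro p hp p' hp' hpp'
        rw [Finset.mem_coe, hB, Finset.mem_filter, Finset.mem_range] at hp hp'
        exact hinj hp.1 hp'.1 hpp'
    have hABL : A.card + B.card = L := by
      rw [hA, hB, Finset.card_filter_add_card_filter_not, Finset.card_range]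
    have htq : t ^ A.card * q ^ B.card = 1 := by rw [← hprodsplit]; exact hP1
    have hA1 : 1 ≤ A.card := by
      by_contra hA0
      have : A.card = 0 := by omega
      rw [this] at htq hABL
      simp only [pow_zero, one_mul] at htq
      exact hq B.card (by omega) htq
    have hB1 : 1 ≤ B.card := by
      by_contra hB0
      have : B.card = 0 := by omega
      rw [this] at htq hABL
      simp only [pow_zero, mul_one] at htq
      exact ht A.card (by omega) htq
    exact ⟨A.card, B.card, hA1, hAcard, hB1, hBcard, htq⟩
  · rintro ⟨i, j, hi1, hin, hj1, hjm, hij⟩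
    refine ⟨fun r => if (r : ℕ) < i then t ^ (r : ℕ) else 0,
            fun s => if (s : ℕ) < j then t ^ i * q ^ (s : ℕ) else 0, ?_, ?_⟩
    · left
      intro h0
      have := congrFun h0 ⟨0, hn⟩
      simp only [Pi.zero_apply] at this
      rw [if_pos (by show 0 < i; omega)] at this
      simp at this
    · intro k hk1 hk2
      have htk : (1 : ℂ) - t ^ k ≠ 0 := sub_ne_zero_of_ne (Ne.symm (ht k hk1))
      have htk' : t ^ k - 1 ≠ 0 := sub_ne_zero_of_ne (ht k hk1)
      have hqk' : q ^ k - 1 ≠ 0 := sub_ne_zero_of_ne (hq k hk1)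
      have hxsum : ∑ r : Fin n, (if (r : ℕ) < i then t ^ (r : ℕ) else 0) ^ k
          = ∑ r ∈ Finset.range i, (t ^ k) ^ r := by
        rw [Fin.sum_univ_eq_sum_range (fun r => (if r < i then t ^ r else 0) ^ k) n]
        rw [← Finset.sum_filter_add_sum_filter_not (Finset.range n) (fun r => r < i)]
        have hfil : (Finset.range n).filter (fun r => r < i) = Finset.range i := by
          ext r; simp only [Finset.mem_filter, Finset.mem_range]; omega
        rw [hfil]
        have h1 : ∑ r ∈ Finset.range i, (if r < i then t ^ r else 0) ^ k
            = ∑ r ∈ Finset.range i, (t ^ k) ^ r := by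
          refine Finset.sum_congr rfl fun r hr => ?_
          rw [if_pos (Finset.mem_range.mp hr)]; ring
        have h2 : ∑ r ∈ (Finset.range n).filter (fun r => ¬ r < i),
            (if r < i then t ^ r else 0) ^ k = 0 := by
          refine Finset.sum_eq_zero fun r hr => ?_
          rw [if_neg (Finset.mem_filter.mp hr).2, zero_pow (by omega)]
        rw [h1, h2, add_zero]
      have hysum : ∑ s : Fin m, (if (s : ℕ) < j then t ^ i * q ^ (s : ℕ) else 0) ^ k
          = (t ^ i) ^ k * ∑ s ∈ Finset.range j, (q ^ k) ^ s := by
        rw [Fin.sum_univ_eq_sum_range (fun s => (if s < j then t ^ i * q ^ s else 0) ^ k) m]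
        rw [← Finset.sum_filter_add_sum_filter_not (Finset.range m) (fun s => s < j)]
        have hfil : (Finset.range m).filter (fun s => s < j) = Finset.range j := by
          ext s; simp only [Finset.mem_filter, Finset.mem_range]; omega
        rw [hfil]
        have h1 : ∑ s ∈ Finset.range j, (if s < j then t ^ i * q ^ s else 0) ^ k
            = (t ^ i) ^ k * ∑ s ∈ Finset.range j, (q ^ k) ^ s := by
          rw [Finset.mul_sum]
          refine Finset.sum_congr rfl fun s hs => ?_
          rw [if_pos (Finset.mem_range.mp hs)]; ring
        have h2 : ∑ s ∈ (Finset.range m).filter (fun s => ¬ s < j),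
            (if s < j then t ^ i * q ^ s else 0) ^ k = 0 := by
          refine Finset.sum_eq_zero fun s hs => ?_
          rw [if_neg (Finset.mem_filter.mp hs).2, zero_pow (by omega)]
        rw [h1, h2, add_zero]
      rw [hxsum, hysum, geom_sum_eq (ht k hk1), geom_sum_eq (hq k hk1)]
      have hkey : (t ^ i) ^ k * (q ^ j) ^ k = 1 := by
        rw [← mul_pow, hij, one_pow]
      field_simp
      linear_combination (1 - q ^ k) * (t ^ k - 1) * hkey
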